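/- Let r ≥ 2, let k = (2r²)^r, and let c = 1/(2r²). With high probability as n → ∞, the k-out random subhypergraph of K_n^(r) contains no independent set of size at least cn. -/

import Mathlib

open Finset

noncomputable section
open scoped Classical

/-- A sample point of the `k`-out model on the complete `r`-graph on `[n]`:
for each vertex `v`, a `k`-element set `E_v` of `r`-subsets of `[n]` containing `v`. -/
abbrev KOutSample (n r k : ℕ) :=
  ∀ v : Fin n, {E : Finset (Finset (Fin n)) // E.card = k ∧ ∀ e ∈ E, v ∈ e ∧ e.card = r}

/-- The edge set `⋃ v, E_v` of the `k`-out random subhypergraph. -/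
def kOutEdges {n r k : ℕ} (ω : KOutSample n r k) : Finset (Finset (Fin n)) :=
  Finset.univ.filter fun e => ∃ v : Fin n, e ∈ (ω v).1

/-- Probability of an event under the uniform (product) distribution of the `k`-out model. -/
def kOutPr (n r k : ℕ) (P : KOutSample n r k → Prop) : ℝ :=
  ((Finset.univ.filter fun ω : KOutSample n r k => P ω).card : ℝ) /
    (Fintype.card (KOutSample n r k))

lemma card_rsets {n : ℕ} (S : Finset (Fin n)) (v : Fin n) (hv : v ∈ S) (r : ℕ) (hr : 1 ≤ r) :
    (Finset.univ.filter fun e : Finset (Fin n) => v ∈ e ∧ e.card = r ∧ e ⊆ S).card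
      = (S.card - 1).choose (r - 1) := by
  have hc : (S.erase v).card = S.card - 1 := Finset.card_erase_of_mem hv
  rw [← hc, ← Finset.card_powersetCard]
  apply Finset.card_bij' (fun e _ => e.erase v) (fun t _ => insert v t)
  · intro e he
    simp only [mem_filter, mem_univ, true_and] at he
    exact Finset.insert_erase he.1
  · intro t ht
    rw [Finset.mem_powersetCard] at ht
    exact Finset.erase_insert (fun h => (Finset.notMem_erase v S) (ht.1 h))
  · intro e he
    simp only [mem_filter, mem_univ, true_and] at he
    rw [Finset.mem_powersetCard]
    refine ⟨Finset.erase_subset_erase v he.2.2, ?_⟩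
    rw [Finset.card_erase_of_mem he.1, he.2.1]
  · intro t ht
    rw [Finset.mem_powersetCard] at ht
    have hvt : v ∉ t := fun h => (Finset.notMem_erase v S) (ht.1 h)
    simp only [mem_filter, mem_univ, true_and]
    refine ⟨Finset.mem_insert_self v t, ?_, ?_⟩
    · rw [Finset.card_insert_of_notMem hvt, ht.2]; omega
    · intro x hx
      rcases Finset.mem_insert.1 hx with h | h
      · exact h ▸ hv
      · exact Finset.erase_subset v S (ht.1 h)

lemma descFactorial_ratio_le (a b k : ℕ) (h : b ≤ a) :
    b.descFactorial k * a ^ k ≤ a.descFactorial k * b ^ k := by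
  induction k with
  | zero => simp
  | succ k ih =>
    have h1 : (b - k) * a ≤ (a - k) * b := by
      rw [Nat.sub_mul, Nat.sub_mul, mul_comm b a]
      exact Nat.sub_le_sub_left (Nat.mul_le_mul_left k h) (a * b)
    calc (b.descFactorial (k+1)) * a ^ (k+1)
        = ((b - k) * a) * (b.descFactorial k * a ^ k) := by
          rw [Nat.descFactorial_succ, pow_succ]; ring
      _ ≤ ((a - k) * b) * (a.descFactorial k * b ^ k) := Nat.mul_le_mul h1 ih
      _ = (a.descFactorial (k+1)) * b ^ (k+1) := by
          rw [Nat.descFactorial_succ, pow_succ]; ring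

lemma pow_le_descFactorial (a : ℕ) : ∀ k : ℕ, (a + 1 - k) ^ k ≤ a.descFactorial k
  | 0 => by simp
  | (k+1) => by
    rw [Nat.descFactorial_succ, pow_succ]
    have h2 : (a + 1 - (k+1)) ^ k ≤ (a + 1 - k) ^ k := Nat.pow_le_pow_left (by omega) k
    have h3 : a + 1 - (k+1) ≤ a - k := by omega
    calc (a + 1 - (k+1)) ^ k * (a + 1 - (k+1))
        ≤ a.descFactorial k * (a - k) :=
          Nat.mul_le_mul (h2.trans (pow_le_descFactorial a k)) h3
      _ = (a - k) * a.descFactorial k := mul_comm _ _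

lemma le_choose : ∀ (a j : ℕ), 1 ≤ j → j ≤ a → a + 1 - j ≤ a.choose j
  | a, 1, _, h2 => by simp [Nat.choose_one_right]
  | 0, (j+2), _, h2 => by omega
  | (a+1), (j+2), _, h2 => by
    have ih : a + 1 - (j+1) ≤ a.choose (j+1) := le_choose a (j+1) (by omega) (by omega)
    rw [Nat.choose_succ_succ]
    omega

lemma choose_le_two_pow (n m : ℕ) : n.choose m ≤ 2 ^ n := by
  rcases le_or_gt m n with h | h
  · calc n.choose m ≤ ∑ i ∈ Finset.range (n+1), n.choose i :=
        Finset.single_le_sum (fun i _ => Nat.zero_le _) (Finset.mem_range.2 (by omega))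
      _ = 2 ^ n := Nat.sum_range_choose n
  · rw [Nat.choose_eq_zero_of_lt h]; exact Nat.zero_le _

lemma count_k_subsets' (k : ℕ) {β : Type*} [Fintype β] (P : Finset β → Prop) (Q : β → Prop)
    [DecidablePred P] [DecidablePred Q]
    (hP : ∀ E, P E ↔ E.card = k ∧ ∀ e ∈ E, Q e) :
    (Finset.univ.filter P).card = ((Finset.univ.filter Q).card).choose k := by
  rw [show (Finset.univ.filter P) = (Finset.univ.filter Q).powersetCard k from by
    ext E
    simp only [hP, Finset.mem_powersetCard, mem_filter, mem_univ, true_and, Finset.subset_iff]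
    tauto]
  rw [Finset.card_powersetCard]

example (n r k : ℕ) (v : Fin n) :
    Fintype.card {E : Finset (Finset (Fin n)) // E.card = k ∧ ∀ e ∈ E, v ∈ e ∧ e.card = r}
      = ((Finset.univ.filter fun e : Finset (Fin n) => v ∈ e ∧ e.card = r).card).choose k := by
  rw [Fintype.card_subtype]
  exact count_k_subsets' k _ (fun e : Finset (Fin n) => v ∈ e ∧ e.card = r) (fun E => Iff.rfl)

lemma card_filter_pi' {ι : Type*} [Fintype ι] {α : ι → Type*} [∀ i, Fintype (α i)]
    [Fintype (∀ i, α i)]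
    (P : (∀ i, α i) → Prop) (p : ∀ i, α i → Prop)
    [DecidablePred P] [∀ i, DecidablePred (p i)]
    (hP : ∀ f, P f ↔ ∀ i, p i (f i)) :
    (Finset.univ.filter P).card = ∏ i, (Finset.univ.filter (p i)).card := by
  rw [← Fintype.card_piFinset]
  congr 1
  ext f
  simp [Fintype.mem_piFinset, hP]

lemma card_filter_subtype' {α : Type*} [Fintype α] (p q : α → Prop) (Q : {x // p x} → Prop)
    [Fintype {x // p x}] [DecidablePred Q] [DecidablePred fun x => p x ∧ q x]
    (hQ : ∀ x, Q x ↔ q x.1) :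
    (Finset.univ.filter Q).card
      = (Finset.univ.filter fun x => p x ∧ q x).card := by
  classical
  apply Finset.card_bij (fun (x : {x // p x}) _ => x.1)
  · intro a ha
    simp only [mem_filter, mem_univ, true_and, hQ] at ha ⊢
    exact ⟨a.2, ha⟩
  · intro a _ b _ h
    exact Subtype.ext h
  · intro b hb
    simp only [mem_filter, mem_univ, true_and] at hb
    exact ⟨⟨b, hb.1⟩, by simp [hQ, hb.2], rfl⟩

lemma card_full_edges (n r : ℕ) (hr : 1 ≤ r) (v : Fin n) :
    (Finset.univ.filter fun e : Finset (Fin n) => v ∈ e ∧ e.card = r).card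
      = (n-1).choose (r-1) := by
  have h := card_rsets (Finset.univ : Finset (Fin n)) v (Finset.mem_univ v) r hr
  simp only [Finset.card_univ, Fintype.card_fin] at h
  rw [← h]
  congr 1
  ext e
  simp [Finset.subset_univ]

lemma card_avoid_edges_mem (n r : ℕ) (hr : 1 ≤ r) (X : Finset (Fin n)) (v : Fin n)
    (hv : v ∈ X) :
    (Finset.univ.filter fun e : Finset (Fin n) => (v ∈ e ∧ e.card = r) ∧ ¬ e ⊆ X).card
      = (n-1).choose (r-1) - (X.card - 1).choose (r-1) := by
  have hsplit := Finset.card_filter_add_card_filter_not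
    (s := Finset.univ.filter fun e : Finset (Fin n) => v ∈ e ∧ e.card = r)
    (p := fun e => e ⊆ X)
  rw [Finset.filter_filter, Finset.filter_filter, card_full_edges n r hr v] at hsplit
  have hM : (Finset.univ.filter fun e : Finset (Fin n) => (v ∈ e ∧ e.card = r) ∧ e ⊆ X).card
      = (X.card - 1).choose (r-1) := by
    rw [← card_rsets X v hv r hr]
    congr 1; ext e; simp; tauto
  rw [hM] at hsplit
  have hle : (Finset.univ.filter fun e : Finset (Fin n) =>
      (v ∈ e ∧ e.card = r) ∧ ¬ e ⊆ X).card
      = (Finset.univ.filter fun e : Finset (Fin n) =>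
        (fun e => v ∈ e ∧ e.card = r) e ∧ ¬ (fun e => e ⊆ X) e).card := rfl
  omega

lemma card_avoid_edges_not_mem (n r : ℕ) (hr : 1 ≤ r) (X : Finset (Fin n)) (v : Fin n)
    (hv : v ∉ X) :
    (Finset.univ.filter fun e : Finset (Fin n) => (v ∈ e ∧ e.card = r) ∧ ¬ e ⊆ X).card
      = (n-1).choose (r-1) := by
  rw [← card_full_edges n r hr v]
  congr 1
  ext e
  simp only [mem_filter, mem_univ, true_and, and_iff_left_iff_imp]
  intro he hsub
  exact hv (hsub he.1)

lemma vertex_count (n r k : ℕ) (hr : 1 ≤ r) (X : Finset (Fin n)) (v : Fin n) :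
    (Finset.univ.filter fun E : {E : Finset (Finset (Fin n)) //
        E.card = k ∧ ∀ e ∈ E, v ∈ e ∧ e.card = r} => ∀ e ∈ E.1, ¬ e ⊆ X).card
      = if v ∈ X then ((n-1).choose (r-1) - (X.card - 1).choose (r-1)).choose k
        else ((n-1).choose (r-1)).choose k := by
  rw [card_filter_subtype' (p := fun E : Finset (Finset (Fin n)) =>
        E.card = k ∧ ∀ e ∈ E, v ∈ e ∧ e.card = r)
      (q := fun E => ∀ e ∈ E, ¬ e ⊆ X)
      (Q := fun E : {E : Finset (Finset (Fin n)) //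
        E.card = k ∧ ∀ e ∈ E, v ∈ e ∧ e.card = r} => ∀ e ∈ E.1, ¬ e ⊆ X)
      (fun x => Iff.rfl)]
  have hcount := count_k_subsets' k
    (P := fun E : Finset (Finset (Fin n)) =>
      (E.card = k ∧ ∀ e ∈ E, v ∈ e ∧ e.card = r) ∧ ∀ e ∈ E, ¬ e ⊆ X)
    (fun e : Finset (Fin n) => (v ∈ e ∧ e.card = r) ∧ ¬ e ⊆ X)
    (fun E => ⟨fun ⟨⟨h1, h2⟩, h3⟩ => ⟨h1, fun e he => ⟨h2 e he, h3 e he⟩⟩,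
      fun ⟨h1, h2⟩ => ⟨⟨h1, fun e he => (h2 e he).1⟩, fun e he => (h2 e he).2⟩⟩)
  rw [hcount]
  by_cases hv : v ∈ X
  · rw [if_pos hv, card_avoid_edges_mem n r hr X v hv]
  · rw [if_neg hv, card_avoid_edges_not_mem n r hr X v hv]

lemma indep_count (n r k : ℕ) (hr : 1 ≤ r) (X : Finset (Fin n)) :
    (Finset.univ.filter fun ω : KOutSample n r k =>
        ∀ v : Fin n, ∀ e ∈ (ω v).1, ¬ e ⊆ X).card
      = (((n-1).choose (r-1) - (X.card - 1).choose (r-1)).choose k) ^ X.card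
        * (((n-1).choose (r-1)).choose k) ^ (n - X.card) := by
  rw [card_filter_pi'
      (P := fun ω : KOutSample n r k => ∀ v : Fin n, ∀ e ∈ (ω v).1, ¬ e ⊆ X)
      (p := fun (v : Fin n) (E : {E : Finset (Finset (Fin n)) //
        E.card = k ∧ ∀ e ∈ E, v ∈ e ∧ e.card = r}) => ∀ e ∈ E.1, ¬ e ⊆ X)
      (hP := fun f => Iff.rfl)]
  rw [Finset.prod_congr rfl fun v _ => vertex_count n r k hr X v]
  rw [← Finset.prod_mul_prod_compl X]
  rw [Finset.prod_congr rfl fun v hv => if_pos hv,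
    Finset.prod_congr rfl fun v hv => if_neg (Finset.mem_compl.1 hv)]
  rw [Finset.prod_const, Finset.prod_const, Finset.card_compl, Fintype.card_fin]

lemma total_count (n r k : ℕ) (hr : 1 ≤ r) :
    Fintype.card (KOutSample n r k) = (((n-1).choose (r-1)).choose k) ^ n := by
  rw [Fintype.card_pi]
  have hv : ∀ v : Fin n,
      Fintype.card {E : Finset (Finset (Fin n)) //
        E.card = k ∧ ∀ e ∈ E, v ∈ e ∧ e.card = r}
      = (((n-1).choose (r-1)).choose k) := by
    intro v
    rw [Fintype.card_subtype]
    rw [count_k_subsets' k _ (fun e : Finset (Fin n) => v ∈ e ∧ e.card = r) (fun E => Iff.rfl)]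
    rw [card_full_edges n r hr v]
  rw [Finset.prod_congr rfl fun v _ => hv v, Finset.prod_const, Finset.card_univ,
    Fintype.card_fin]

lemma union_bound (n r k m : ℕ) (hr : 1 ≤ r) :
    (Finset.univ.filter fun ω : KOutSample n r k =>
       ∃ X : Finset (Fin n), X.card = m ∧ ∀ v : Fin n, ∀ e ∈ (ω v).1, ¬ e ⊆ X).card
    ≤ n.choose m * ((((n-1).choose (r-1) - (m - 1).choose (r-1)).choose k) ^ m
        * (((n-1).choose (r-1)).choose k) ^ (n - m)) := by
  classical
  have hsub : (Finset.univ.filter fun ω : KOutSample n r k =>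
       ∃ X : Finset (Fin n), X.card = m ∧ ∀ v : Fin n, ∀ e ∈ (ω v).1, ¬ e ⊆ X)
      ⊆ (Finset.univ.powersetCard m).biUnion
          (fun X => Finset.univ.filter fun ω : KOutSample n r k =>
            ∀ v : Fin n, ∀ e ∈ (ω v).1, ¬ e ⊆ X) := by
    intro ω hω
    rw [Finset.mem_filter] at hω
    obtain ⟨-, X, hXcard, hXind⟩ := hω
    exact Finset.mem_biUnion.2 ⟨X, Finset.mem_powersetCard_univ.2 hXcard,
      Finset.mem_filter.2 ⟨Finset.mem_univ _, hXind⟩⟩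
  calc (Finset.univ.filter fun ω : KOutSample n r k =>
       ∃ X : Finset (Fin n), X.card = m ∧ ∀ v : Fin n, ∀ e ∈ (ω v).1, ¬ e ⊆ X).card
      ≤ ((Finset.univ.powersetCard m).biUnion
          (fun X => Finset.univ.filter fun ω : KOutSample n r k =>
            ∀ v : Fin n, ∀ e ∈ (ω v).1, ¬ e ⊆ X)).card := Finset.card_le_card hsub
    _ ≤ ∑ X ∈ Finset.univ.powersetCard m,
          (Finset.univ.filter fun ω : KOutSample n r k =>
            ∀ v : Fin n, ∀ e ∈ (ω v).1, ¬ e ⊆ X).card := Finset.card_biUnion_le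
    _ = ∑ X ∈ Finset.univ.powersetCard m,
          ((((n-1).choose (r-1) - (m - 1).choose (r-1)).choose k) ^ m
            * (((n-1).choose (r-1)).choose k) ^ (n - m)) := by
        refine Finset.sum_congr rfl fun X hX => ?_
        have hXc : X.card = m := Finset.mem_powersetCard_univ.1 hX
        rw [indep_count n r k hr X, hXc]
    _ = n.choose m * ((((n-1).choose (r-1) - (m - 1).choose (r-1)).choose k) ^ m
        * (((n-1).choose (r-1)).choose k) ^ (n - m)) := by
        rw [Finset.sum_const, Finset.card_powersetCard, Finset.card_univ, Fintype.card_fin,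
          smul_eq_mul]

lemma real_estimate (r n k m N M A B : ℕ)
    (hr : 2 ≤ r)
    (hk : (k:ℝ) = (2*(r:ℝ)^2)^r)
    (hm_low : (1 / (2 * (r:ℝ)^2)) * n ≤ m)
    (hmn : m ≤ n) (hmr : r + 1 ≤ m)
    (hreal2 : (r:ℝ) * (2*(r:ℝ)^2) + 1 ≤ n)
    (hMN : M ≤ N) (hA : 0 < A) (hNpos : 0 < N)
    (hql : B * N^k ≤ A * (N-M)^k)
    (hMdf : (m - r + 1)^(r-1) ≤ (r-1).factorial * M)
    (hNdf : N * (r-1).factorial ≤ n^(r-1)) :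
    ((n.choose m : ℝ) * ((B:ℝ)^m * (A:ℝ)^(n-m))) / (A:ℝ)^n
      ≤ Real.exp ((r:ℝ)*r*(2*(r:ℝ)^2)) * (2*Real.exp (-1))^n := by
  have hrR : (2:ℝ) ≤ r := by exact_mod_cast hr
  set t : ℝ := 2*(r:ℝ)^2 with ht
  have htpos : 0 < t := by positivity
  have hn0 : (0:ℝ) < n := by nlinarith
  have hA' : (0:ℝ) < A := by exact_mod_cast hA
  have hN' : (0:ℝ) < N := by exact_mod_cast hNpos
  set D : ℝ := (r:ℝ)*r*t with hD
  set j : ℕ := r - 1 with hj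
  have hjr : (j:ℝ) = (r:ℝ) - 1 := by
    rw [hj]; push_cast [Nat.cast_sub (by omega : 1 ≤ r)]; ring
  -- Step 1: LHS = choose * (B/A)^m
  have hAn : (A:ℝ)^n = (A:ℝ)^m * (A:ℝ)^(n-m) := by
    rw [← pow_add]; congr 1; omega
  have step1 : ((n.choose m : ℝ) * ((B:ℝ)^m * (A:ℝ)^(n-m))) / (A:ℝ)^n
      = (n.choose m : ℝ) * ((B:ℝ)/(A:ℝ))^m := by
    rw [hAn, div_pow, mul_div_assoc]
    congr 1
    rw [mul_comm ((A:ℝ)^m) ((A:ℝ)^(n-m)), ← div_div,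
      mul_div_assoc, div_self (by positivity : (A:ℝ)^(n-m) ≠ 0), mul_one]
  -- Step 2: B/A ≤ ((N-M)/N)^k
  have hql' : (B:ℝ) * (N:ℝ)^k ≤ (A:ℝ) * ((N-M : ℕ):ℝ)^k := by exact_mod_cast hql
  have step2 : (B:ℝ)/(A:ℝ) ≤ (((N-M:ℕ):ℝ)/(N:ℝ))^k := by
    rw [div_pow, div_le_div_iff₀ hA' (by positivity)]
    linarith [hql']
  -- Step 3: base ≤ exp(-(M/N))
  have hsub : ((N-M:ℕ):ℝ) = (N:ℝ) - (M:ℝ) := by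
    push_cast [Nat.cast_sub hMN]; ring
  have hbase0 : (0:ℝ) ≤ ((N-M:ℕ):ℝ)/(N:ℝ) := by positivity
  have step3 : ((N-M:ℕ):ℝ)/(N:ℝ) ≤ Real.exp (-((M:ℝ)/(N:ℝ))) := by
    have h1 := Real.add_one_le_exp (-((M:ℝ)/(N:ℝ)))
    have h2 : ((N-M:ℕ):ℝ)/(N:ℝ) = -((M:ℝ)/(N:ℝ)) + 1 := by
      rw [hsub]; field_simp; ring
    rw [h2]; exact h1
  -- Step 4: (B/A)^m ≤ exp(-(M/N) * (k*m))
  have hBA0 : (0:ℝ) ≤ (B:ℝ)/(A:ℝ) := by positivity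
  have step4 : ((B:ℝ)/(A:ℝ))^m ≤ Real.exp (-((M:ℝ)/(N:ℝ)) * (k*m)) := by
    calc ((B:ℝ)/(A:ℝ))^m ≤ ((((N-M:ℕ):ℝ)/(N:ℝ))^k)^m :=
          pow_le_pow_left₀ hBA0 step2 m
      _ = (((N-M:ℕ):ℝ)/(N:ℝ))^(k*m) := by rw [← pow_mul]
      _ ≤ (Real.exp (-((M:ℝ)/(N:ℝ))))^(k*m) := pow_le_pow_left₀ hbase0 step3 _
      _ = Real.exp (-((M:ℝ)/(N:ℝ)) * (k*m)) := by
          rw [← Real.exp_nat_mul]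
          congr 1
          push_cast
          ring
  -- Step 5: n - D ≤ (M/N) * (k*m)
  have hmR : ((r:ℝ)+1) ≤ (m:ℝ) := by exact_mod_cast hmr
  have hnt : (n:ℝ)/t ≤ (m:ℝ) := by
    have : (1 / t) * n ≤ m := hm_low
    calc (n:ℝ)/t = (1/t) * n := by ring
      _ ≤ m := this
  have hrtn : (r:ℝ)*t ≤ (n:ℝ) := by linarith
  have hcast2 : ((m - r + 1:ℕ):ℝ) = (m:ℝ) - (r:ℝ) + 1 := by
    push_cast [Nat.cast_sub (by omega : r ≤ m)]; ring
  have hMdf' : ((m - r + 1:ℕ):ℝ)^j ≤ ((r-1).factorial : ℝ) * M := by exact_mod_cast hMdf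
  have hNdf' : (N:ℝ) * ((r-1).factorial : ℝ) ≤ (n:ℝ)^j := by exact_mod_cast hNdf
  have hfacpos : (0:ℝ) < ((r-1).factorial : ℝ) := by
    exact_mod_cast Nat.factorial_pos (r-1)
  have hMN1 : ((m - r + 1:ℕ):ℝ)^j / (n:ℝ)^j ≤ (M:ℝ)/(N:ℝ) := by
    have h1 : ((m - r + 1:ℕ):ℝ)^j / (n:ℝ)^j
        ≤ (((r-1).factorial : ℝ) * M) / (((r-1).factorial : ℝ) * N) := by
      apply div_le_div₀ (by positivity) hMdf' (by positivity)
      calc ((r-1).factorial : ℝ) * N = (N:ℝ) * ((r-1).factorial : ℝ) := by ring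
        _ ≤ (n:ℝ)^j := hNdf'
    rwa [mul_div_mul_left _ _ (ne_of_gt hfacpos)] at h1
  have hb0 : (0:ℝ) ≤ (n:ℝ)/t - r := by
    rw [sub_nonneg, le_div_iff₀ htpos]; linarith
  have hb1 : (n:ℝ)/t - r ≤ ((m - r + 1:ℕ):ℝ) := by
    rw [hcast2]; linarith
  have hMN2 : ((n:ℝ)/t - r)^j / (n:ℝ)^j ≤ (M:ℝ)/(N:ℝ) := by
    refine le_trans ?_ hMN1
    gcongr
  -- key: n - D ≤ (M/N) * (k*m)
  have hid : t^r * ((n:ℝ)/t) * (((n:ℝ)/t - r)^j / (n:ℝ)^j)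
      = (n:ℝ) * (((n:ℝ) - r*t)/n)^j := by
    have h1 : (n:ℝ)/t - r = ((n:ℝ) - r*t)/t := by field_simp
    have h2 : t^(r:ℕ) = t^(j+1) := by congr 1; omega
    rw [h1, div_pow, div_pow, h2, pow_succ]
    field_simp
  have hbern : (n:ℝ) - (j:ℝ)*((r:ℝ)*t) ≤ (n:ℝ)*(((n:ℝ) - r*t)/n)^j := by
    have h2 : 1 + (-((r:ℝ)*t)/n) = ((n:ℝ) - r*t)/n := by field_simp; ring
    have h3 : (-2:ℝ) ≤ -((r:ℝ)*t)/n := by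
      have h4 : ((r:ℝ)*t)/n ≤ 1 := (div_le_one hn0).2 hrtn
      have h5 : (0:ℝ) ≤ ((r:ℝ)*t)/n := by positivity
      rw [neg_div]; linarith
    have h6 := one_add_mul_le_pow h3 j
    calc (n:ℝ) - (j:ℝ)*((r:ℝ)*t) = (n:ℝ) * (1 + (j:ℝ)*(-((r:ℝ)*t)/n)) := by
          field_simp
          ring
      _ ≤ (n:ℝ) * (1 + (-((r:ℝ)*t)/n))^j := by
          apply mul_le_mul_of_nonneg_left h6 (le_of_lt hn0)
      _ = (n:ℝ)*(((n:ℝ) - r*t)/n)^j := by rw [h2]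
  have hprod : t^r * ((n:ℝ)/t) * (((n:ℝ)/t - r)^j / (n:ℝ)^j)
      ≤ (k:ℝ) * (m:ℝ) * ((M:ℝ)/(N:ℝ)) := by
    rw [hk]
    apply mul_le_mul (mul_le_mul le_rfl hnt (by positivity) (by positivity)) hMN2
      (by positivity) (by positivity)
  have step5 : (n:ℝ) - D ≤ ((M:ℝ)/(N:ℝ)) * ((k:ℝ)*(m:ℝ)) := by
    have hjD : (j:ℝ)*((r:ℝ)*t) ≤ D := by
      rw [hD, hjr]
      have h0 : (0:ℝ) ≤ (r:ℝ)*t := by positivity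
      calc ((r:ℝ)-1)*((r:ℝ)*t) ≤ (r:ℝ)*((r:ℝ)*t) :=
            mul_le_mul_of_nonneg_right (by linarith) h0
        _ = (r:ℝ)*(r:ℝ)*t := by ring
    calc (n:ℝ) - D ≤ (n:ℝ) - (j:ℝ)*((r:ℝ)*t) := by linarith
      _ ≤ (n:ℝ)*(((n:ℝ) - r*t)/n)^j := hbern
      _ = t^r * ((n:ℝ)/t) * (((n:ℝ)/t - r)^j / (n:ℝ)^j) := hid.symm
      _ ≤ (k:ℝ) * (m:ℝ) * ((M:ℝ)/(N:ℝ)) := hprod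
      _ = ((M:ℝ)/(N:ℝ)) * ((k:ℝ)*(m:ℝ)) := by ring
  -- Step 6: conclude
  have hchoose : ((n.choose m : ℕ):ℝ) ≤ 2^n := by
    exact_mod_cast choose_le_two_pow n m
  have hexp : Real.exp (-((M:ℝ)/(N:ℝ)) * ((k:ℝ)*(m:ℝ))) ≤ Real.exp (D - n) := by
    apply Real.exp_le_exp.2
    linarith [step5]
  have hpown : (Real.exp (-1:ℝ))^n = Real.exp (-(n:ℝ)) := by
    rw [← Real.exp_nat_mul]
    norm_num
  have hfin : Real.exp (D - (n:ℝ)) = Real.exp D * (Real.exp (-1))^n := by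
    rw [Real.exp_sub, hpown, Real.exp_neg, div_eq_mul_inv]
  have hstep4' : ((B:ℝ)/(A:ℝ))^m ≤ Real.exp (-((M:ℝ)/(N:ℝ)) * ((k:ℝ)*(m:ℝ))) := by
    have : -((M:ℝ)/(N:ℝ)) * ((k*m : ℕ):ℝ) = -((M:ℝ)/(N:ℝ)) * ((k:ℝ)*(m:ℝ)) := by
      push_cast; ring
    calc ((B:ℝ)/(A:ℝ))^m ≤ Real.exp (-((M:ℝ)/(N:ℝ)) * ((k*m : ℕ):ℝ)) := by
          refine le_trans step4 ?_
          apply Real.exp_le_exp.2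
          push_cast
          ring_nf
          exact le_rfl
      _ = _ := by rw [this]
  calc ((n.choose m : ℝ) * ((B:ℝ)^m * (A:ℝ)^(n-m))) / (A:ℝ)^n
      = (n.choose m : ℝ) * ((B:ℝ)/(A:ℝ))^m := step1
    _ ≤ 2^n * Real.exp (-((M:ℝ)/(N:ℝ)) * ((k:ℝ)*(m:ℝ))) :=
        mul_le_mul hchoose hstep4' (by positivity) (by positivity)
    _ ≤ 2^n * Real.exp (D - n) := mul_le_mul_of_nonneg_left hexp (by positivity)
    _ = Real.exp D * (2*Real.exp (-1))^n := by
        rw [hfin, mul_pow]; ring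

lemma card_filter_congr2 {α : Type*} [Fintype α] (P Q : α → Prop)
    [DecidablePred P] [DecidablePred Q] (h : ∀ x, P x ↔ Q x) :
    (Finset.univ.filter P).card = (Finset.univ.filter Q).card := by
  refine congrArg Finset.card ?_
  ext x
  simp only [Finset.mem_filter, Finset.mem_univ, true_and, h x]

lemma kOutPr_split (n r k : ℕ) (P Q : KOutSample n r k → Prop)
    (hQ : ∀ ω, Q ω ↔ ¬ P ω)
    (h : Fintype.card (KOutSample n r k) ≠ 0) :
    kOutPr n r k P = 1 - kOutPr n r k Q := by
  unfold kOutPr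
  have hQP : (Finset.univ.filter fun ω : KOutSample n r k => Q ω).card
      = (Finset.univ.filter fun ω : KOutSample n r k => ¬ P ω).card :=
    card_filter_congr2 _ _ hQ
  have hsplit : (Finset.univ.filter fun ω : KOutSample n r k => P ω).card
      + (Finset.univ.filter fun ω : KOutSample n r k => ¬ P ω).card
      = Fintype.card (KOutSample n r k) := by
    classical
    rw [← Finset.card_univ]
    have h0 := Finset.card_filter_add_card_filter_not
      (s := (Finset.univ : Finset (KOutSample n r k))) (p := fun ω => P ω)
    rw [← h0]
  have hT : (0:ℝ) < (Fintype.card (KOutSample n r k) : ℝ) := by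
    exact_mod_cast Nat.pos_of_ne_zero h
  have hc : ((Finset.univ.filter fun ω : KOutSample n r k => P ω).card : ℝ)
      = (Fintype.card (KOutSample n r k) : ℝ)
        - ((Finset.univ.filter fun ω : KOutSample n r k => Q ω).card : ℝ) := by
    rw [hQP]
    have := congrArg (fun x : ℕ => (x:ℝ)) hsplit
    push_cast at this
    linarith
  rw [hc]
  rw [sub_div, div_self (ne_of_gt hT)]

lemma kOutPr_nonneg (n r k : ℕ) (P : KOutSample n r k → Prop) : 0 ≤ kOutPr n r k P := by
  unfold kOutPr
  positivity

lemma kOutPr_card_bound (n r k : ℕ) (P Q : KOutSample n r k → Prop) [DecidablePred Q] (c : ℕ)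
    (hPQ : ∀ ω, P ω ↔ Q ω)
    (hT : 0 < Fintype.card (KOutSample n r k))
    (h : (Finset.univ.filter Q).card ≤ c) :
    kOutPr n r k P ≤ (c : ℝ) / (Fintype.card (KOutSample n r k)) := by
  unfold kOutPr
  have hT' : (0:ℝ) < (Fintype.card (KOutSample n r k) : ℝ) := by exact_mod_cast hT
  gcongr
  refine Nat.cast_le.2 (le_trans (Finset.card_le_card fun x hx => ?_) h)
  have hx1 := (Finset.mem_filter.1 hx).2
  exact Finset.mem_filter.2 ⟨Finset.mem_univ _, (hPQ x).1 hx1⟩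


/-- For `r ≥ 2`, `k = (2r²)^r` and `c = 1/(2r²)`, w.h.p. the `k`-out
subhypergraph of `K_n^(r)` has no independent set of size at least `cn`. -/
theorem stmt9 (r : ℕ) (hr : 2 ≤ r) :
    Filter.Tendsto (fun n : ℕ =>
        kOutPr n r ((2 * r ^ 2) ^ r) (fun ω =>
          ∀ X : Finset (Fin n), (∀ e ∈ kOutEdges ω, ¬ e ⊆ X) →
            (X.card : ℝ) < (1 / (2 * (r : ℝ) ^ 2)) * n))
      Filter.atTop (nhds 1) := by
  have hr1 : 1 ≤ r := by omega
  have hrR : (2:ℝ) ≤ (r:ℝ) := by exact_mod_cast hr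
  set k := (2 * r ^ 2) ^ r with hk
  set D : ℝ := (r:ℝ)*(r:ℝ)*(2*(r:ℝ)^2) with hD
  set g : ℕ → ℝ := fun n => Real.exp D * (2 * Real.exp (-1))^n with hgdef
  set q : ℕ → ℝ := fun n => kOutPr n r k (fun ω =>
      ¬ ∀ X : Finset (Fin n), (∀ e ∈ kOutEdges ω, ¬ e ⊆ X) →
          (X.card : ℝ) < (1 / (2 * (r : ℝ) ^ 2)) * n) with hqdef
  -- limit of the bound
  have hgtend : Filter.Tendsto g Filter.atTop (nhds 0) := by
    have hepos := Real.exp_pos 1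
    have he : (2:ℝ) < Real.exp 1 := by
      have := Real.exp_one_gt_d9
      linarith
    have h1 : 2 * Real.exp (-1) < 1 := by
      rw [Real.exp_neg, ← div_eq_mul_inv, div_lt_one hepos]
      exact he
    have h0 : (0:ℝ) ≤ 2 * Real.exp (-1) := by positivity
    have := (tendsto_pow_atTop_nhds_zero_of_lt_one h0 h1).const_mul (Real.exp D)
    simpa [hgdef] using this
  -- main eventual estimate
  set u := 2*r^3 with hu
  set w := 2*r^2*(r+1) with hw
  have hmain : ∀ᶠ n in Filter.atTop,
      (kOutPr n r k (fun ω =>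
          ∀ X : Finset (Fin n), (∀ e ∈ kOutEdges ω, ¬ e ⊆ X) →
            (X.card : ℝ) < (1 / (2 * (r : ℝ) ^ 2)) * n) = 1 - q n)
        ∧ 0 ≤ q n ∧ q n ≤ g n := by
    filter_upwards [Filter.eventually_ge_atTop (k + u + w + r + 2)] with n hn
    -- nat bounds
    have hk1 : 1 ≤ k := by rw [hk]; exact Nat.one_le_pow _ _ (by positivity)
    have hnk : k + r ≤ n := by omega
    have hnw : w ≤ n := by omega
    have hnu : u + 1 ≤ n := by omega
    have hn1 : 1 ≤ n := by omega
    -- real versions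
    have htpos : (0:ℝ) < 2*(r:ℝ)^2 := by positivity
    have hwR : (w:ℝ) = 2*(r:ℝ)^2*((r:ℝ)+1) := by rw [hw]; push_cast; ring
    have huR : (u:ℝ) = (r:ℝ)*(2*(r:ℝ)^2) := by rw [hu]; push_cast; ring
    have hnR : ((w:ℕ):ℝ) ≤ (n:ℝ) := by exact_mod_cast hnw
    have hnuR : ((u:ℕ):ℝ) + 1 ≤ (n:ℝ) := by exact_mod_cast hnu
    have hreal2 : (r:ℝ) * (2*(r:ℝ)^2) + 1 ≤ (n:ℝ) := by rw [← huR]; exact hnuR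
    -- m
    set m := ⌈(1 / (2 * (r : ℝ) ^ 2)) * (n:ℝ)⌉₊ with hm
    have hm_low : (1 / (2 * (r : ℝ) ^ 2)) * (n:ℝ) ≤ (m:ℝ) := Nat.le_ceil _
    have hcnr : ((r:ℝ)+1) ≤ (1 / (2 * (r : ℝ) ^ 2)) * (n:ℝ) := by
      have h1 : (1 / (2 * (r : ℝ) ^ 2)) * (n:ℝ) = (n:ℝ) / (2*(r:ℝ)^2) := by ring
      rw [h1, le_div_iff₀ htpos]
      calc ((r:ℝ)+1) * (2*(r:ℝ)^2) = (w:ℝ) := by rw [hwR]; ring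
        _ ≤ (n:ℝ) := hnR
    have hmr : r + 1 ≤ m := by
      have : ((r:ℝ)+1) ≤ (m:ℝ) := le_trans hcnr hm_low
      exact_mod_cast this
    have hmn : m ≤ n := by
      rw [hm, Nat.ceil_le]
      apply mul_le_of_le_one_left (Nat.cast_nonneg n)
      rw [div_le_one htpos]
      nlinarith
    -- key nat quantities
    have hkN : k ≤ (n-1).choose (r-1) := by
      have h1 := le_choose (n-1) (r-1) (by omega) (by omega)
      have h2 : k ≤ (n-1) + 1 - (r-1) := by omega
      omega
    have hA : 0 < ((n-1).choose (r-1)).choose k := Nat.choose_pos hkN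
    have hNpos : 0 < (n-1).choose (r-1) := by omega
    have hMN : (m-1).choose (r-1) ≤ (n-1).choose (r-1) :=
      Nat.choose_le_choose _ (by omega)
    have hT : 0 < Fintype.card (KOutSample n r k) := by
      rw [total_count n r k hr1]
      positivity
    -- descFactorial consequences
    have hql : ((n-1).choose (r-1) - (m-1).choose (r-1)).choose k * ((n-1).choose (r-1))^k
        ≤ ((n-1).choose (r-1)).choose k * ((n-1).choose (r-1) - (m-1).choose (r-1))^k := by
      have h := descFactorial_ratio_le ((n-1).choose (r-1))
        ((n-1).choose (r-1) - (m-1).choose (r-1)) k (Nat.sub_le _ _)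
      rw [Nat.descFactorial_eq_factorial_mul_choose,
        Nat.descFactorial_eq_factorial_mul_choose] at h
      apply Nat.le_of_mul_le_mul_left ?_ (Nat.factorial_pos k)
      calc k.factorial * (((n-1).choose (r-1) - (m-1).choose (r-1)).choose k
              * ((n-1).choose (r-1))^k)
          = (k.factorial * ((n-1).choose (r-1) - (m-1).choose (r-1)).choose k)
              * ((n-1).choose (r-1))^k := by ring
        _ ≤ (k.factorial * ((n-1).choose (r-1)).choose k)
              * ((n-1).choose (r-1) - (m-1).choose (r-1))^k := h
        _ = k.factorial * (((n-1).choose (r-1)).choose k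
              * ((n-1).choose (r-1) - (m-1).choose (r-1))^k) := by ring
    have hMdf : (m - r + 1)^(r-1) ≤ (r-1).factorial * ((m-1).choose (r-1)) := by
      have h := pow_le_descFactorial (m-1) (r-1)
      rw [Nat.descFactorial_eq_factorial_mul_choose] at h
      have he : (m-1) + 1 - (r-1) = m - r + 1 := by omega
      rwa [he] at h
    have hNdf : (n-1).choose (r-1) * (r-1).factorial ≤ n^(r-1) := by
      have h1 : (n-1).descFactorial (r-1) ≤ (n-1)^(r-1) := Nat.descFactorial_le_pow _ _
      rw [Nat.descFactorial_eq_factorial_mul_choose] at h1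
      calc (n-1).choose (r-1) * (r-1).factorial
          = (r-1).factorial * ((n-1).choose (r-1)) := by ring
        _ ≤ (n-1)^(r-1) := h1
        _ ≤ n^(r-1) := Nat.pow_le_pow_left (by omega) _
    -- the union bound on the bad event
    have hbadcard : (Finset.univ.filter fun ω : KOutSample n r k =>
        ¬ ∀ X : Finset (Fin n), (∀ e ∈ kOutEdges ω, ¬ e ⊆ X) →
          (X.card : ℝ) < (1 / (2 * (r : ℝ) ^ 2)) * n).card
        ≤ n.choose m * ((((n-1).choose (r-1) - (m - 1).choose (r-1)).choose k) ^ m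
            * (((n-1).choose (r-1)).choose k) ^ (n - m)) := by
      refine le_trans (Finset.card_le_card ?_) (union_bound n r k m hr1)
      intro ω hω
      rw [Finset.mem_filter] at hω ⊢
      obtain ⟨-, hbad⟩ := hω
      push_neg at hbad
      obtain ⟨X, hX1, hX2⟩ := hbad
      have hmX : m ≤ X.card := by
        rw [hm, Nat.ceil_le]
        exact hX2
      obtain ⟨Y, hYX, hYcard⟩ := Finset.exists_subset_card_eq hmX
      refine ⟨Finset.mem_univ _, Y, hYcard, fun v e he hsubY => ?_⟩
      refine hX1 e ?_ (hsubY.trans hYX)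
      exact Finset.mem_filter.mpr ⟨Finset.mem_univ _, ⟨v, he⟩⟩
    -- assemble
    have hsplit := kOutPr_split n r k
      (fun ω => ∀ X : Finset (Fin n), (∀ e ∈ kOutEdges ω, ¬ e ⊆ X) →
          (X.card : ℝ) < (1 / (2 * (r : ℝ) ^ 2)) * n)
      (fun ω => ¬ ∀ X : Finset (Fin n), (∀ e ∈ kOutEdges ω, ¬ e ⊆ X) →
          (X.card : ℝ) < (1 / (2 * (r : ℝ) ^ 2)) * n)
      (fun ω => Iff.rfl) hT.ne'
    refine ⟨hsplit, kOutPr_nonneg _ _ _ _, ?_⟩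
    -- bound q n
    have hq1 := kOutPr_card_bound n r k
      (fun ω => ¬ ∀ X : Finset (Fin n), (∀ e ∈ kOutEdges ω, ¬ e ⊆ X) →
          (X.card : ℝ) < (1 / (2 * (r : ℝ) ^ 2)) * n)
      (fun ω => ¬ ∀ X : Finset (Fin n), (∀ e ∈ kOutEdges ω, ¬ e ⊆ X) →
          (X.card : ℝ) < (1 / (2 * (r : ℝ) ^ 2)) * n)
      (n.choose m * ((((n-1).choose (r-1) - (m - 1).choose (r-1)).choose k) ^ m
            * (((n-1).choose (r-1)).choose k) ^ (n - m))) (fun ω => Iff.rfl) hT hbadcard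
    rw [total_count n r k hr1] at hq1
    have hkR : ((k:ℕ):ℝ) = (2*(r:ℝ)^2)^r := by rw [hk]; push_cast; ring
    have hre := real_estimate r n k m ((n-1).choose (r-1)) ((m-1).choose (r-1))
      (((n-1).choose (r-1)).choose k) (((n-1).choose (r-1) - (m-1).choose (r-1)).choose k)
      hr hkR hm_low hmn hmr hreal2 hMN hA hNpos hql hMdf hNdf
    have hcast : ((n.choose m * ((((n-1).choose (r-1) - (m - 1).choose (r-1)).choose k) ^ m
            * (((n-1).choose (r-1)).choose k) ^ (n - m)) : ℕ) : ℝ)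
          / ((((n-1).choose (r-1)).choose k : ℕ) ^ n : ℝ)
        = ((n.choose m : ℝ) * (((((n-1).choose (r-1) - (m-1).choose (r-1)).choose k : ℕ):ℝ)^m
            * ((((n-1).choose (r-1)).choose k : ℕ):ℝ)^(n-m)))
          / ((((n-1).choose (r-1)).choose k : ℕ):ℝ)^n := by
      push_cast
      ring
    calc q n ≤ _ := hq1
      _ ≤ Real.exp ((r:ℝ)*(r:ℝ)*(2*(r:ℝ)^2)) * (2*Real.exp (-1))^n := by
          rw [show ((((n-1).choose (r-1)).choose k ^ n : ℕ) : ℝ)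
              = ((((n-1).choose (r-1)).choose k : ℕ):ℝ)^n by push_cast; ring] at *
          rw [hcast]
          exact hre
      _ = g n := by rw [hgdef, hD]
  -- conclude
  have hq0 : Filter.Tendsto q Filter.atTop (nhds 0) :=
    squeeze_zero' (hmain.mono fun n h => h.2.1) (hmain.mono fun n h => h.2.2) hgtend
  have hfinal : Filter.Tendsto (fun n => 1 - q n) Filter.atTop (nhds 1) := by
    have := (tendsto_const_nhds (x := (1:ℝ)) (f := Filter.atTop)).sub hq0
    simpa using this
  exact hfinal.congr' (hmain.mono fun n h => h.1.symm)
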